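/- Let m ∈ ℕ, n ≥ v ≥ 0, p ∈ (0,1], and let Z ~ Bin(n−v, p). Then E[(Z+1)^{−m}] ≤ m! / ((n−v+1)^m p^m). -/

import Mathlib

open scoped BigOperators

lemma asc_le (m z : ℕ) : (z+1).ascFactorial m ≤ m.factorial * (z+1)^m := by
  induction m with
  | zero => simp
  | succ k ih =>
    rw [Nat.ascFactorial_succ]
    calc (z + 1 + k) * (z+1).ascFactorial k ≤ ((k+1)*(z+1)) * (k.factorial * (z+1)^k) := by
          apply Nat.mul_le_mul _ ih; nlinarith
      _ = (k+1).factorial * (z+1)^(k+1) := by rw [Nat.factorial_succ]; ring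

lemma key_id (N m z : ℕ) (hz : z ≤ N) :
    N.choose z * (N+1).ascFactorial m = (N+m).choose (z+m) * (z+1).ascFactorial m := by
  have h1 : N.choose z * (N+1).ascFactorial m * (z.factorial * (N-z).factorial) = (N+m).factorial := by
    have := Nat.choose_mul_factorial_mul_factorial hz
    calc N.choose z * (N+1).ascFactorial m * (z.factorial * (N-z).factorial)
        = (N.choose z * z.factorial * (N-z).factorial) * (N+1).ascFactorial m := by ring
      _ = N.factorial * (N+1).ascFactorial m := by rw [this]
      _ = (N+m).factorial := Nat.factorial_mul_ascFactorial N m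
  have h2 : (N+m).choose (z+m) * (z+1).ascFactorial m * (z.factorial * (N-z).factorial) = (N+m).factorial := by
    have hzm : z + m ≤ N + m := by omega
    have := Nat.choose_mul_factorial_mul_factorial hzm
    have hs : N + m - (z + m) = N - z := by omega
    calc (N+m).choose (z+m) * (z+1).ascFactorial m * (z.factorial * (N-z).factorial)
        = (N+m).choose (z+m) * (z.factorial * (z+1).ascFactorial m) * (N-z).factorial := by ring
      _ = (N+m).choose (z+m) * (z+m).factorial * (N-z).factorial := by
          rw [Nat.factorial_mul_ascFactorial]
      _ = (N+m).factorial := by rw [hs] at this; exact this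
  have hpos : 0 < z.factorial * (N-z).factorial :=
    Nat.mul_pos z.factorial_pos (N-z).factorial_pos
  exact Nat.eq_of_mul_eq_mul_right hpos (h1.trans h2.symm)

lemma term_ineq (N m z : ℕ) (hz : z ≤ N) :
    N.choose z * (N+1)^m ≤ m.factorial * (z+1)^m * (N+m).choose (z+m) := by
  have hA : 0 < (z+1).ascFactorial m := Nat.ascFactorial_pos _ _
  apply Nat.le_of_mul_le_mul_right _ hA
  calc N.choose z * (N+1)^m * (z+1).ascFactorial m
      ≤ N.choose z * ((N+1).ascFactorial m * (m.factorial * (z+1)^m)) := by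
        rw [Nat.mul_assoc]
        exact Nat.mul_le_mul_left _
          (Nat.mul_le_mul (Nat.pow_succ_le_ascFactorial _ _) (asc_le m z))
    _ = (N.choose z * (N+1).ascFactorial m) * (m.factorial * (z+1)^m) := by ring
    _ = ((N+m).choose (z+m) * (z+1).ascFactorial m) * (m.factorial * (z+1)^m) := by
        rw [key_id N m z hz]
    _ = m.factorial * (z+1)^m * (N+m).choose (z+m) * (z+1).ascFactorial m := by ring

theorem statement3 (m n v : ℕ) (hv : v ≤ n) (p : ℝ) (hp0 : 0 < p) (hp1 : p ≤ 1) :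
    ∑ z ∈ Finset.range (n - v + 1),
        ((n - v).choose z : ℝ) * p ^ z * (1 - p) ^ (n - v - z) / ((z : ℝ) + 1) ^ m
      ≤ (Nat.factorial m : ℝ) / ((((n : ℝ) - (v : ℝ)) + 1) ^ m * p ^ m) := by
  set N := n - v with hN
  have hcast : ((n : ℝ) - (v : ℝ)) = (N : ℝ) := by
    rw [hN, Nat.cast_sub hv]
  rw [hcast]
  set q : ℝ := 1 - p with hq
  have hq0 : 0 ≤ q := by linarith
  have hNp : (0:ℝ) < ((N:ℝ)+1)^m * p^m := by positivity
  -- constant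
  set C : ℝ := (m.factorial : ℝ) / (((N:ℝ)+1)^m * p^m) with hC
  have hC0 : 0 ≤ C := by positivity
  -- per term bound
  have hterm : ∀ z ∈ Finset.range (N+1),
      ((N).choose z : ℝ) * p ^ z * q ^ (N - z) / ((z : ℝ) + 1) ^ m
        ≤ C * (((N+m).choose (z+m) : ℝ) * p ^ (z+m) * q ^ ((N+m) - (z+m))) := by
    intro z hzmem
    have hz : z ≤ N := by simpa using Nat.lt_succ_iff.mp (Finset.mem_range.mp hzmem)
    have hkey : ((N).choose z : ℝ) * ((N:ℝ)+1)^m ≤ (m.factorial : ℝ) * ((z:ℝ)+1)^m * ((N+m).choose (z+m) : ℝ) := by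
      have := term_ineq N m z hz
      exact_mod_cast this
    have hsub : N + m - (z + m) = N - z := by omega
    rw [hsub]
    have hz1 : (0:ℝ) < ((z:ℝ)+1)^m := by positivity
    rw [div_le_iff₀ hz1, hC]
    have hpq : (0:ℝ) ≤ p ^ z * q ^ (N - z) := by positivity
    have h1 : ((N).choose z : ℝ) ≤ (m.factorial : ℝ) * ((z:ℝ)+1)^m * ((N+m).choose (z+m) : ℝ) / (((N:ℝ)+1)^m) := by
      rw [le_div_iff₀ (by positivity)]
      linarith
    have hpm : p ^ (z+m) = p^z * p^m := by rw [pow_add]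
    rw [div_mul_eq_mul_div, div_mul_eq_mul_div, hpm]
    rw [le_div_iff₀ hNp]
    calc ((N).choose z : ℝ) * p ^ z * q ^ (N-z) * (((N:ℝ)+1)^m * p^m)
        = (((N).choose z : ℝ) * ((N:ℝ)+1)^m) * (p^z * q^(N-z) * p^m) := by ring
      _ ≤ ((m.factorial : ℝ) * ((z:ℝ)+1)^m * ((N+m).choose (z+m) : ℝ)) * (p^z * q^(N-z) * p^m) := by
          apply mul_le_mul_of_nonneg_right hkey; positivity
      _ = (m.factorial : ℝ) * (((N+m).choose (z+m) : ℝ) * (p^z * p^m) * q^(N-z)) * ((z:ℝ)+1)^m := by ring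
  have hsum1 : ∑ z ∈ Finset.range (N+1),
      (((N+m).choose (z+m) : ℝ) * p ^ (z+m) * q ^ ((N+m) - (z+m))) ≤ 1 := by
    have hre : ∑ z ∈ Finset.range (N+1),
        (((N+m).choose (z+m) : ℝ) * p ^ (z+m) * q ^ ((N+m) - (z+m)))
        = ∑ j ∈ Finset.Ico m (N+m+1), (((N+m).choose j : ℝ) * p ^ j * q ^ ((N+m) - j)) := by
      rw [Finset.sum_Ico_eq_sum_range]
      have : N + m + 1 - m = N + 1 := by omega
      rw [this]
      apply Finset.sum_congr rfl
      intro i _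
      rw [add_comm m i]
    rw [hre]
    have hfull : ∑ j ∈ Finset.range (N+m+1), (((N+m).choose j : ℝ) * p ^ j * q ^ ((N+m) - j)) = 1 := by
      have hpq1 : p + q = 1 := by rw [hq]; ring
      calc ∑ j ∈ Finset.range (N+m+1), (((N+m).choose j : ℝ) * p ^ j * q ^ ((N+m) - j))
          = ∑ j ∈ Finset.range (N+m+1), p ^ j * q ^ ((N+m) - j) * ((N+m).choose j : ℝ) := by
            apply Finset.sum_congr rfl; intro j _; ring
        _ = (p + q) ^ (N+m) := (add_pow p q (N+m)).symm
        _ = 1 := by rw [hpq1, one_pow]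
    rw [← hfull]
    apply Finset.sum_le_sum_of_subset_of_nonneg
    · intro j hj
      simp only [Finset.mem_Ico, Finset.mem_range] at *
      omega
    · intro j _ _
      positivity
  calc ∑ z ∈ Finset.range (N+1), ((N).choose z : ℝ) * p ^ z * q ^ (N - z) / ((z : ℝ) + 1) ^ m
      ≤ ∑ z ∈ Finset.range (N+1), C * (((N+m).choose (z+m) : ℝ) * p ^ (z+m) * q ^ ((N+m) - (z+m))) :=
        Finset.sum_le_sum hterm
    _ = C * ∑ z ∈ Finset.range (N+1), (((N+m).choose (z+m) : ℝ) * p ^ (z+m) * q ^ ((N+m) - (z+m))) :=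
        (Finset.mul_sum _ _ _).symm
    _ ≤ C * 1 := by apply mul_le_mul_of_nonneg_left hsum1 hC0
    _ = C := mul_one C
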